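/- Let Ω ⊆ ℝⁿ be open, A : Ω → Lin(V, W) continuous (V, W finite-dimensional inner product spaces), and ξ₀ ∈ Ω. If there is a sequence ξ_m → ξ₀ with rank(A(ξ_m)) > rank(A(ξ₀)) for all m, then the map ξ ↦ ‖A(ξ)†‖ is unbounded on every neighborhood of ξ₀. -/

import Mathlib

open Module LinearMap Metric Filter Topology Polynomial

/-- Orthogonal projection onto a submodule, as an endomorphism. -/
noncomputable def orthProj {E : Type*} [NormedAddCommGroup E] [InnerProductSpace ℝ E]
    [FiniteDimensional ℝ E] (K : Submodule ℝ E) : E →L[ℝ] E :=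
  K.subtypeL.comp (Submodule.orthogonalProjectionOnto K)

/-- `X` is the Moore–Penrose pseudoinverse of `A`: `A X = Proj_{im A}`,
`X A = Proj_{im A*}`, together with the normalization `X Proj_{im A} = X`
(i.e. `X` vanishes on `(im A)ᗮ`), which pins `X` down uniquely. -/
def IsMP {V W : Type*} [NormedAddCommGroup V] [InnerProductSpace ℝ V] [FiniteDimensional ℝ V]
    [NormedAddCommGroup W] [InnerProductSpace ℝ W] [FiniteDimensional ℝ W]
    (A : V →L[ℝ] W) (X : W →L[ℝ] V) : Prop :=
  A ∘L X = orthProj (LinearMap.range (A : V →ₗ[ℝ] W)) ∧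
  X ∘L A = orthProj (LinearMap.range (ContinuousLinearMap.adjoint A : W →ₗ[ℝ] V)) ∧
  X ∘L orthProj (LinearMap.range (A : V →ₗ[ℝ] W)) = X

section Aux

variable {V W : Type*} [NormedAddCommGroup V] [InnerProductSpace ℝ V] [FiniteDimensional ℝ V]
  [NormedAddCommGroup W] [InnerProductSpace ℝ W] [FiniteDimensional ℝ W]

lemma ker_adjoint_eq' (B : V →L[ℝ] W) :
    LinearMap.ker (ContinuousLinearMap.adjoint B : W →ₗ[ℝ] V) = (LinearMap.range (B : V →ₗ[ℝ] W))ᗮ := by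
  ext w
  simp only [LinearMap.mem_ker, Submodule.mem_orthogonal, ContinuousLinearMap.coe_coe]
  constructor
  · rintro h u ⟨v, rfl⟩
    rw [ContinuousLinearMap.coe_coe, ← ContinuousLinearMap.adjoint_inner_right, h, inner_zero_right]
  · intro h
    rw [← inner_self_eq_zero (𝕜 := ℝ)]
    rw [ContinuousLinearMap.adjoint_inner_right]
    exact h _ ⟨_, rfl⟩

lemma range_adjoint_eq' (B : V →L[ℝ] W) :
    LinearMap.range (ContinuousLinearMap.adjoint B : W →ₗ[ℝ] V) = (LinearMap.ker (B : V →ₗ[ℝ] W))ᗮ := by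
  have := ker_adjoint_eq' (ContinuousLinearMap.adjoint B)
  rw [ContinuousLinearMap.adjoint_adjoint] at this
  rw [this, Submodule.orthogonal_orthogonal]

lemma finrank_range_adjoint' (B : V →L[ℝ] W) :
    finrank ℝ (LinearMap.range (ContinuousLinearMap.adjoint B : W →ₗ[ℝ] V))
      = finrank ℝ (LinearMap.range (B : V →ₗ[ℝ] W)) := by
  rw [range_adjoint_eq']
  have h1 := Submodule.finrank_add_finrank_orthogonal (K := LinearMap.ker (B : V →ₗ[ℝ] W))
  have h2 := LinearMap.finrank_range_add_finrank_ker (B : V →ₗ[ℝ] W)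
  have h3 : LinearMap.range (B : V →ₗ[ℝ] W) = LinearMap.range (B : V →ₗ[ℝ] W) := by
    ext x; simp [LinearMap.mem_range]
  have h4 : LinearMap.ker (B : V →ₗ[ℝ] W) = LinearMap.ker (B : V →ₗ[ℝ] W) := by
    ext x; simp [LinearMap.mem_ker]
  rw [h3, h4] at h2
  omega

/-- The key inequality: if `rank A₀ < rank B` and `X` is the pseudoinverse of `B`,
then `1 ≤ ‖X‖ ‖B - A₀‖`. -/
lemma key_MP_ineq (B A₀ : V →L[ℝ] W) (X : W →L[ℝ] V) (hX : IsMP B X)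
    (hr : finrank ℝ (LinearMap.range (A₀ : V →ₗ[ℝ] W)) < finrank ℝ (LinearMap.range (B : V →ₗ[ℝ] W))) :
    1 ≤ ‖X‖ * ‖B - A₀‖ := by
  set K := LinearMap.range (ContinuousLinearMap.adjoint B : W →ₗ[ℝ] V) with hKdef
  set L := LinearMap.ker (A₀ : V →ₗ[ℝ] W) with hLdef
  have hK : finrank ℝ K = finrank ℝ (LinearMap.range (B : V →ₗ[ℝ] W)) := finrank_range_adjoint' B
  have h2 := LinearMap.finrank_range_add_finrank_ker (A₀ : V →ₗ[ℝ] W)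
  have h3 : LinearMap.range (A₀ : V →ₗ[ℝ] W) = LinearMap.range (A₀ : V →ₗ[ℝ] W) := by
    ext x; simp [LinearMap.mem_range]
  have h4 : LinearMap.ker (A₀ : V →ₗ[ℝ] W) = L := by
    ext x; simp [hLdef, LinearMap.mem_ker]
  rw [h3, h4] at h2
  have hrB : finrank ℝ (LinearMap.range (B : V →ₗ[ℝ] W)) ≤ finrank ℝ V := by
    have := Submodule.finrank_le K
    omega
  have hne : K ⊓ L ≠ ⊥ := by
    intro hbot
    have hs := Submodule.finrank_sup_add_finrank_inf_eq K L
    have hle : finrank ℝ ↥(K ⊔ L) ≤ finrank ℝ V := Submodule.finrank_le _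
    rw [hbot] at hs
    simp only [finrank_bot, add_zero] at hs
    omega
  obtain ⟨v, hv, hv0⟩ := Submodule.exists_mem_ne_zero_of_ne_bot hne
  have hvK : v ∈ K := hv.1
  have hvL : A₀ v = 0 := hv.2
  have hXB : X (B v) = v := by
    have h := hX.2.1
    have h' : (X ∘L B) v = orthProj K v := by rw [h]
    simp only [ContinuousLinearMap.comp_apply] at h'
    rw [h']
    simp only [orthProj, ContinuousLinearMap.comp_apply, Submodule.subtypeL_apply]
    exact (Submodule.starProjection_eq_self_iff (K := K)).mpr hvK
  have hcalc : ‖v‖ ≤ ‖X‖ * ‖B - A₀‖ * ‖v‖ := by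
    have e1 : (B - A₀) v = B v := by simp [hvL]
    calc ‖v‖ = ‖X ((B - A₀) v)‖ := by rw [e1, hXB]
      _ ≤ ‖X‖ * ‖(B - A₀) v‖ := ContinuousLinearMap.le_opNorm _ _
      _ ≤ ‖X‖ * (‖B - A₀‖ * ‖v‖) := by
          gcongr
          exact ContinuousLinearMap.le_opNorm _ _
      _ = ‖X‖ * ‖B - A₀‖ * ‖v‖ := by ring
  have hvpos : 0 < ‖v‖ := norm_pos_iff.mpr hv0
  nlinarith [hcalc, hvpos]

end Aux

/-- If a sequence `ξ_m → ξ₀` has `rank A(ξ_m) > rank A(ξ₀)`, then `ξ ↦ ‖A(ξ)†‖`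
is unbounded on every neighborhood of `ξ₀`. -/
theorem pseudoinverse_unbounded_of_rank_jump
    {V W : Type*} [NormedAddCommGroup V] [InnerProductSpace ℝ V] [FiniteDimensional ℝ V]
    [NormedAddCommGroup W] [InnerProductSpace ℝ W] [FiniteDimensional ℝ W]
    {n : ℕ} (Ω : Set (EuclideanSpace ℝ (Fin n))) (hΩ : IsOpen Ω)
    (A : EuclideanSpace ℝ (Fin n) → (V →L[ℝ] W)) (hA : ContinuousOn A Ω)
    (ξ₀ : EuclideanSpace ℝ (Fin n)) (hξ₀ : ξ₀ ∈ Ω)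
    (ξ : ℕ → EuclideanSpace ℝ (Fin n)) (hmem : ∀ m, ξ m ∈ Ω)
    (hlim : Tendsto ξ atTop (𝓝 ξ₀))
    (hrank : ∀ m, finrank ℝ (LinearMap.range (A ξ₀ : V →ₗ[ℝ] W)) < finrank ℝ (LinearMap.range (A (ξ m) : V →ₗ[ℝ] W)))
    (Adag : EuclideanSpace ℝ (Fin n) → (W →L[ℝ] V))
    (hdag : ∀ ζ ∈ Ω, IsMP (A ζ) (Adag ζ)) :
    ∀ U ∈ 𝓝 ξ₀, ∀ M : ℝ, ∃ ζ ∈ U ∩ Ω, M < ‖Adag ζ‖ := by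
  intro U hU M
  set C : ℝ := max M 0 + 1 with hCdef
  have hC : 0 < C := by positivity
  have hcont : Tendsto (fun m => A (ξ m)) atTop (𝓝 (A ξ₀)) :=
    ((hA.continuousAt (hΩ.mem_nhds hξ₀)).tendsto).comp hlim
  have hnorm : ∀ᶠ m in atTop, ‖A (ξ m) - A ξ₀‖ < 1 / C := by
    have := hcont.eventually (Metric.ball_mem_nhds (A ξ₀) (by positivity : (0:ℝ) < 1 / C))
    filter_upwards [this] with m hm
    rwa [dist_eq_norm] at hm
  have hUev : ∀ᶠ m in atTop, ξ m ∈ U := hlim hU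
  obtain ⟨m, hm1, hm2⟩ := (hnorm.and hUev).exists
  refine ⟨ξ m, ⟨hm2, hmem m⟩, ?_⟩
  have hkey := key_MP_ineq (A (ξ m)) (A ξ₀) (Adag (ξ m)) (hdag _ (hmem m)) (hrank m)
  have hX0 : (0:ℝ) ≤ ‖Adag (ξ m)‖ := norm_nonneg _
  have hd0 : (0:ℝ) ≤ ‖A (ξ m) - A ξ₀‖ := norm_nonneg _
  have hMC : M < C := by
    simp only [hCdef]
    have := le_max_left M 0
    linarith
  have hXpos : 0 < ‖Adag (ξ m)‖ := by nlinarith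
  have hdC : ‖A (ξ m) - A ξ₀‖ * C < 1 := (lt_div_iff₀ hC).mp hm1
  nlinarith [mul_le_mul_of_nonneg_left hkey hC.le, mul_lt_mul_of_pos_left hdC hXpos]
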